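/- For 0 < x < y < 1 there exists a unique z* ∈ (x, y) such that D(z*, x) = D(z*, y); moreover the Chernoff information satisfies D*(x,y) = D(z*, x) = D(z*, y), and D*(x,y) = max_{z ∈ [x,y]} min{D(z,x), D(z,y)}. -/

import Mathlib

open Set

/-- KL divergence between Bernoulli(p) and Bernoulli(q) (real-valued formula,
valid when `q ∈ (0,1)`). -/
noncomputable def klBerR (p q : ℝ) : ℝ :=
  p * Real.log (p / q) + (1 - p) * Real.log ((1 - p) / (1 - q))

/-- Chernoff information between Bernoulli(x) and Bernoulli(y) for `0 < x < y < 1`. -/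
noncomputable def chernoffR (x y : ℝ) : ℝ :=
  ⨅ z : Set.Ioo (0:ℝ) 1, max (klBerR z x) (klBerR z y)

lemma klBerR_self {p : ℝ} (hp0 : 0 < p) (hp1 : p < 1) : klBerR p p = 0 := by
  have h1 : p ≠ 0 := hp0.ne'
  have h2 : (1:ℝ) - p ≠ 0 := by linarith
  simp [klBerR, div_self h1, div_self h2]

lemma klBerR_pos {p q : ℝ} (hp0 : 0 < p) (hp1 : p < 1) (hq0 : 0 < q) (hq1 : q < 1)
    (hne : p ≠ q) : 0 < klBerR p q := by
  have hp1' : (0:ℝ) < 1 - p := by linarith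
  have hq1' : (0:ℝ) < 1 - q := by linarith
  have h1 : Real.log (q / p) < q / p - 1 :=
    Real.log_lt_sub_one_of_pos (by positivity) (by
      intro h
      exact hne (by field_simp at h; linarith))
  have h2 : Real.log ((1 - q) / (1 - p)) < (1 - q) / (1 - p) - 1 :=
    Real.log_lt_sub_one_of_pos (by positivity) (by
      intro h
      apply hne
      field_simp at h
      linarith)
  have e1 : Real.log (p / q) = -Real.log (q / p) := by
    rw [← Real.log_inv, inv_div]
  have e2 : Real.log ((1 - p) / (1 - q)) = -Real.log ((1 - q) / (1 - p)) := by
    rw [← Real.log_inv, inv_div]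
  have m1 : p * Real.log (q / p) < p * (q / p - 1) := by
    exact mul_lt_mul_of_pos_left h1 hp0
  have m2 : (1 - p) * Real.log ((1 - q) / (1 - p)) < (1 - p) * ((1 - q) / (1 - p) - 1) := by
    exact mul_lt_mul_of_pos_left h2 hp1'
  have f1 : p * (q / p - 1) = q - p := by field_simp
  have f2 : (1 - p) * ((1 - q) / (1 - p) - 1) = p - q := by field_simp; ring
  unfold klBerR
  rw [e1, e2]
  nlinarith [m1, m2]

lemma hasDerivAt_klBerR {q z : ℝ} (hq0 : 0 < q) (hq1 : q < 1) (hz0 : 0 < z) (hz1 : z < 1) :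
    HasDerivAt (fun t => klBerR t q) (Real.log (z / q) - Real.log ((1 - z) / (1 - q))) z := by
  have hq1' : (0:ℝ) < 1 - q := by linarith
  have hz1' : (0:ℝ) < 1 - z := by linarith
  have h1 : HasDerivAt (fun t : ℝ => t / q) (1 / q) z := by
    simpa using (hasDerivAt_id z).div_const q
  have hl1 : HasDerivAt (fun t : ℝ => Real.log (t / q)) ((1 / q) / (z / q)) z :=
    h1.log (div_pos hz0 hq0).ne'
  have h2 : HasDerivAt (fun t : ℝ => (1 - t) / (1 - q)) (-1 / (1 - q)) z := by
    simpa using ((hasDerivAt_id z).const_sub 1).div_const (1 - q)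
  have hl2 : HasDerivAt (fun t : ℝ => Real.log ((1 - t) / (1 - q)))
      ((-1 / (1 - q)) / ((1 - z) / (1 - q))) z :=
    h2.log (div_pos hz1' hq1').ne'
  have := ((hasDerivAt_id z).mul hl1).add (((hasDerivAt_id z).const_sub 1).mul hl2)
  simp only [id_eq, one_mul] at this
  have h' : Real.log (z / q) - Real.log ((1 - z) / (1 - q))
      = Real.log (z / q) + z * (1 / q / (z / q)) +
        (-1 * Real.log ((1 - z) / (1 - q)) + (1 - z) * (-1 / (1 - q) / ((1 - z) / (1 - q)))) := by
    field_simp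
    ring
  rw [h']
  exact this

lemma klBerR_strictMonoOn {q : ℝ} (hq0 : 0 < q) (hq1 : q < 1) :
    StrictMonoOn (fun z => klBerR z q) (Set.Ico q 1) := by
  apply strictMonoOn_of_deriv_pos (convex_Ico q 1)
  · intro z hz
    exact (hasDerivAt_klBerR hq0 hq1 (hq0.trans_le hz.1) hz.2).continuousAt.continuousWithinAt
  · intro z hz
    rw [interior_Ico] at hz
    have hz0 : 0 < z := hq0.trans hz.1
    rw [(hasDerivAt_klBerR hq0 hq1 hz0 hz.2).deriv]
    have hA : 0 < Real.log (z / q) := Real.log_pos ((one_lt_div hq0).2 hz.1)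
    have hB : Real.log ((1 - z) / (1 - q)) < 0 := by
      apply Real.log_neg (div_pos (by linarith [hz.2]) (by linarith))
      rw [div_lt_one (by linarith)]
      linarith [hz.1]
    linarith

lemma klBerR_strictAntiOn {q : ℝ} (hq0 : 0 < q) (hq1 : q < 1) :
    StrictAntiOn (fun z => klBerR z q) (Set.Ioc 0 q) := by
  apply strictAntiOn_of_deriv_neg (convex_Ioc 0 q)
  · intro z hz
    exact (hasDerivAt_klBerR hq0 hq1 hz.1 (lt_of_le_of_lt hz.2 hq1)).continuousAt.continuousWithinAt
  · intro z hz
    rw [interior_Ioc] at hz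
    rw [(hasDerivAt_klBerR hq0 hq1 hz.1 (hz.2.trans hq1)).deriv]
    have hA : Real.log (z / q) < 0 := by
      apply Real.log_neg (div_pos hz.1 hq0)
      rw [div_lt_one hq0]
      exact hz.2
    have hB : 0 < Real.log ((1 - z) / (1 - q)) := by
      apply Real.log_pos
      rw [lt_div_iff₀ (by linarith)]
      linarith [hz.2]
    linarith

/-- For `0 < x < y < 1` there is a unique `z* ∈ (x,y)` with `D(z*,x) = D(z*,y)`;
moreover `D*(x,y) = D(z*,x) = D(z*,y)` and
`D*(x,y) = max_{z ∈ [x,y]} min{D(z,x), D(z,y)}`. -/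
theorem chernoff_crossing_point
    (x y : ℝ) (hx : 0 < x) (hxy : x < y) (hy : y < 1) :
    ∃ z : ℝ, z ∈ Set.Ioo x y ∧ klBerR z x = klBerR z y ∧
      (∀ w ∈ Set.Ioo x y, klBerR w x = klBerR w y → w = z) ∧
      chernoffR x y = klBerR z x ∧ chernoffR x y = klBerR z y ∧
      chernoffR x y = ⨆ w : Set.Icc x y, min (klBerR w x) (klBerR w y) := by
  have hy0 : 0 < y := hx.trans hxy
  have hx1 : x < 1 := hxy.trans hy
  have hx1' : (0:ℝ) < 1 - x := by linarith
  have hy1' : (0:ℝ) < 1 - y := by linarith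
  set A : ℝ := Real.log y - Real.log x with hA_def
  set B : ℝ := Real.log (1 - x) - Real.log (1 - y) with hB_def
  have hA : 0 < A := sub_pos.2 (Real.log_lt_log hx hxy)
  have hB : 0 < B := sub_pos.2 (Real.log_lt_log hy1' (by linarith))
  have hAB : 0 < A + B := by linarith
  -- the affine identity
  have hg : ∀ z : ℝ, 0 < z → z < 1 → klBerR z x - klBerR z y = z * (A + B) - B := by
    intro z hz0 hz1
    have hz1' : (0:ℝ) < 1 - z := by linarith
    unfold klBerR
    rw [Real.log_div hz0.ne' hx.ne', Real.log_div hz0.ne' hy0.ne',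
      Real.log_div hz1'.ne' hx1'.ne', Real.log_div hz1'.ne' hy1'.ne']
    simp only [hA_def, hB_def]
    ring
  set zs : ℝ := B / (A + B) with hzs_def
  -- x < zs < y
  have hgx : klBerR x x - klBerR x y < 0 := by
    rw [klBerR_self hx hx1]
    linarith [klBerR_pos hx hx1 hy0 hy hxy.ne]
  have hgy : 0 < klBerR y x - klBerR y y := by
    rw [klBerR_self hy0 hy]
    linarith [klBerR_pos hy0 hy hx hx1 hxy.ne']
  have hxz : x < zs := by
    have := hg x hx hx1
    rw [this] at hgx
    rw [hzs_def, lt_div_iff₀ hAB]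
    linarith
  have hzy : zs < y := by
    have := hg y hy0 hy
    rw [this] at hgy
    rw [hzs_def, div_lt_iff₀ hAB]
    linarith
  have hzs0 : 0 < zs := hx.trans hxz
  have hzs1 : zs < 1 := hzy.trans hy
  have hcross : klBerR zs x = klBerR zs y := by
    have := hg zs hzs0 hzs1
    have hz : zs * (A + B) - B = 0 := by
      rw [hzs_def]; field_simp; ring
    linarith
  -- monotonicity facts
  have hmono := klBerR_strictMonoOn hx hx1
  have hanti := klBerR_strictAntiOn hy0 hy
  have hmono' : ∀ a b : ℝ, x ≤ a → a ≤ b → b < 1 → klBerR a x ≤ klBerR b x := by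
    intro a b ha hab hb1
    exact hmono.monotoneOn ⟨ha, lt_of_le_of_lt hab hb1⟩ ⟨le_trans ha hab, hb1⟩ hab
  have hanti' : ∀ a b : ℝ, 0 < a → a ≤ b → b ≤ y → klBerR b y ≤ klBerR a y := by
    intro a b ha hab hb
    exact hanti.antitoneOn ⟨ha, le_trans hab hb⟩ ⟨lt_of_lt_of_le ha hab, hb⟩ hab
  -- lower bound for the max over (0,1)
  have hlow : ∀ z : ℝ, 0 < z → z < 1 → klBerR zs x ≤ max (klBerR z x) (klBerR z y) := by
    intro z hz0 hz1
    rcases le_total z zs with h | h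
    · have : klBerR zs y ≤ klBerR z y := hanti' z zs hz0 h hzy.le
      rw [hcross]
      exact le_trans this (le_max_right _ _)
    · have : klBerR zs x ≤ klBerR z x := hmono' zs z hxz.le h hz1
      exact le_trans this (le_max_left _ _)
  -- upper bound for the min over [x,y]
  have hupp : ∀ w : ℝ, x ≤ w → w ≤ y → min (klBerR w x) (klBerR w y) ≤ klBerR zs x := by
    intro w hw1 hw2
    rcases le_total w zs with h | h
    · exact le_trans (min_le_left _ _) (hmono' w zs hw1 h hzs1)
    · rw [hcross]
      exact le_trans (min_le_right _ _) (hanti' zs w hzs0 h hw2)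
  -- chernoffR = c
  haveI hne01 : Nonempty (Set.Ioo (0:ℝ) 1) := ⟨⟨zs, hzs0, hzs1⟩⟩
  haveI hnexy : Nonempty (Set.Icc x y) := ⟨⟨zs, hxz.le, hzy.le⟩⟩
  have hinf : chernoffR x y = klBerR zs x := by
    apply le_antisymm
    · have hle : chernoffR x y ≤ max (klBerR zs x) (klBerR zs y) := by
        apply ciInf_le ⟨klBerR zs x, ?_⟩ (⟨zs, hzs0, hzs1⟩ : Set.Ioo (0:ℝ) 1)
        rintro r ⟨⟨z, hz⟩, rfl⟩
        exact hlow z hz.1 hz.2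
      rw [← hcross, max_self] at hle
      exact hle
    · exact le_ciInf fun ⟨z, hz⟩ => hlow z hz.1 hz.2
  have hsup : (⨆ w : Set.Icc x y, min (klBerR w x) (klBerR w y)) = klBerR zs x := by
    apply le_antisymm
    · exact ciSup_le fun ⟨w, hw⟩ => hupp w hw.1 hw.2
    · have hle : min (klBerR zs x) (klBerR zs y) ≤
          ⨆ w : Set.Icc x y, min (klBerR w x) (klBerR w y) := by
        apply le_ciSup (f := fun w : Set.Icc x y => min (klBerR w x) (klBerR w y)) ⟨klBerR zs x, ?_⟩
          (⟨zs, hxz.le, hzy.le⟩ : Set.Icc x y)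
        rintro r ⟨⟨w, hw⟩, rfl⟩
        exact hupp w hw.1 hw.2
      rwa [← hcross, min_self] at hle
  refine ⟨zs, ⟨hxz, hzy⟩, hcross, ?_, hinf, by rw [hinf]; exact hcross, by rw [hinf, hsup]⟩
  intro w hw heq
  have hw0 : 0 < w := hx.trans hw.1
  have hw1 : w < 1 := hw.2.trans hy
  have := hg w hw0 hw1
  rw [heq, sub_self] at this
  have : w * (A + B) = B := by linarith
  rw [hzs_def, eq_div_iff hAB.ne']
  exact this
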